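/- Let A = (a_x)_{x∈X} be a finite-outcome measurement on a compact convex state space S, and suppose A is an extreme point of the convex set of all measurements with outcome set X. Then the joint measurement of A with any measurement B, when it exists, is unique. In particular, A is intersubjective: the unique joint measurement of A with itself is determined, hence every joint measurement C = (c_{x,x'}) of A with itself satisfies ∑_x c_{x,x} = 1_S if the canonical joint measurement does (and the diagonal is uniquely determined). -/

import Mathlib

open Finset

/-- An effect on the state space `S`: an affine map taking values in `[0,1]` on `S`. -/
def IsEffect {V : Type*} [AddCommGroup V] [Module ℝ V] (S : Set V) (a : V →ᵃ[ℝ] ℝ) : Prop :=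
  ∀ s ∈ S, 0 ≤ a s ∧ a s ≤ 1

/-- A finite-outcome measurement: a family of effects summing to the unit effect on `S`. -/
def IsMeasurement {V : Type*} [AddCommGroup V] [Module ℝ V] (S : Set V) {X : Type*} [Fintype X]
    (A : X → (V →ᵃ[ℝ] ℝ)) : Prop :=
  (∀ x, IsEffect S (A x)) ∧ ∀ s ∈ S, ∑ x, A x s = 1

/-- A joint measurement of `A` and `B`: a measurement on `X × Y` whose marginals are `A`, `B`. -/
def IsJointMeasurement {V : Type*} [AddCommGroup V] [Module ℝ V] (S : Set V)
    {X Y : Type*} [Fintype X] [Fintype Y]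
    (A : X → (V →ᵃ[ℝ] ℝ)) (B : Y → (V →ᵃ[ℝ] ℝ)) (C : X × Y → (V →ᵃ[ℝ] ℝ)) : Prop :=
  IsMeasurement S C ∧ (∀ x, ∀ s ∈ S, ∑ y, C (x, y) s = A x s) ∧
    (∀ y, ∀ s ∈ S, ∑ x, C (x, y) s = B y s)

/-- `A` is `α`-intersubjective: every joint measurement of `A` with itself has diagonal
weight at least `α · 1_S`. -/
def Intersubjective {V : Type*} [AddCommGroup V] [Module ℝ V] (S : Set V) {X : Type*} [Fintype X]
    (α : ℝ) (A : X → (V →ᵃ[ℝ] ℝ)) : Prop :=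
  ∀ C : X × X → (V →ᵃ[ℝ] ℝ), IsJointMeasurement S A A C → ∀ s ∈ S, α ≤ ∑ x, C (x, x) s

/-- `A` is `α`-sharp: for distinct outcomes `x ≠ x'`, any effect below both `A x` and `A x'`
is below `(1 - α) · 1_S`. -/
def SharpMeasurement {V : Type*} [AddCommGroup V] [Module ℝ V] (S : Set V) {X : Type*} [Fintype X]
    (α : ℝ) (A : X → (V →ᵃ[ℝ] ℝ)) : Prop :=
  ∀ x x', x ≠ x' → ∀ b : V →ᵃ[ℝ] ℝ, IsEffect S b → (∀ s ∈ S, b s ≤ A x s) →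
    (∀ s ∈ S, b s ≤ A x' s) → ∀ s ∈ S, b s ≤ 1 - α



private lemma unique_joint_key {V : Type} [NormedAddCommGroup V] [NormedSpace ℝ V]
    (S : Set V) {X : Type*} [Fintype X] (A : X → (V →ᵃ[ℝ] ℝ)) (hA : IsMeasurement S A)
    (hext : A ∈ Set.extremePoints ℝ {B : X → (V →ᵃ[ℝ] ℝ) | IsMeasurement S B})
    (Y : Type*) [Fintype Y] (B : Y → (V →ᵃ[ℝ] ℝ))
    (C₁ C₂ : X × Y → (V →ᵃ[ℝ] ℝ)) (hC₁ : IsJointMeasurement S A B C₁)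
    (hC₂ : IsJointMeasurement S A B C₂) : ∀ p, ∀ s ∈ S, C₁ p s = C₂ p s := by
  classical
  rintro ⟨x₀, y₀⟩ s hs
  set E : X → (V →ᵃ[ℝ] ℝ) := fun x => C₁ (x, y₀) - C₂ (x, y₀) with hE
  set D₁ : X → (V →ᵃ[ℝ] ℝ) := A + E with hD₁def
  set D₂ : X → (V →ᵃ[ℝ] ℝ) := A - E with hD₂def
  have hval : ∀ (C : X × Y → (V →ᵃ[ℝ] ℝ)), IsJointMeasurement S A B C →
      ∀ x, ∀ t ∈ S, A x t - C (x, y₀) t = ∑ y ∈ Finset.univ.erase y₀, C (x, y) t := by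
    intro C hC x t ht
    have h1 : (∑ y ∈ Finset.univ.erase y₀, C (x, y) t) + C (x, y₀) t = ∑ y, C (x, y) t :=
      Finset.sum_erase_add _ _ (Finset.mem_univ y₀)
    have h2 := hC.2.1 x t ht
    linarith
  have hD₁val : ∀ x, ∀ t ∈ S,
      D₁ x t = C₁ (x, y₀) t + ∑ y ∈ Finset.univ.erase y₀, C₂ (x, y) t := by
    intro x t ht
    have := hval C₂ hC₂ x t ht
    simp only [hD₁def, hE, Pi.add_apply, AffineMap.coe_add, AffineMap.coe_sub, Pi.sub_apply]
    linarith
  have hD₂val : ∀ x, ∀ t ∈ S,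
      D₂ x t = C₂ (x, y₀) t + ∑ y ∈ Finset.univ.erase y₀, C₁ (x, y) t := by
    intro x t ht
    have := hval C₁ hC₁ x t ht
    simp only [hD₂def, hE, Pi.sub_apply, AffineMap.coe_sub]
    linarith
  have hmeas : ∀ (D : X → (V →ᵃ[ℝ] ℝ)) (Ca Cb : X × Y → (V →ᵃ[ℝ] ℝ)),
      IsJointMeasurement S A B Ca → IsJointMeasurement S A B Cb →
      (∀ x, ∀ t ∈ S, D x t = Ca (x, y₀) t + ∑ y ∈ Finset.univ.erase y₀, Cb (x, y) t) →
      IsMeasurement S D := by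
    intro D Ca Cb hCa hCb hDv
    have hnonneg : ∀ x, ∀ t ∈ S, 0 ≤ D x t := by
      intro x t ht
      rw [hDv x t ht]
      have h1 := (hCa.1.1 (x, y₀) t ht).1
      have h2 : 0 ≤ ∑ y ∈ Finset.univ.erase y₀, Cb (x, y) t :=
        Finset.sum_nonneg fun y _ => (hCb.1.1 (x, y) t ht).1
      linarith
    have hsum : ∀ t ∈ S, ∑ x, D x t = 1 := by
      intro t ht
      have heval : ∑ x, D x t
          = ∑ x, (Ca (x, y₀) t + ∑ y ∈ Finset.univ.erase y₀, Cb (x, y) t) :=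
        Finset.sum_congr rfl fun x _ => hDv x t ht
      rw [heval, Finset.sum_add_distrib]
      have h1 : ∑ x, Ca (x, y₀) t = B y₀ t := hCa.2.2 y₀ t ht
      have h2 : ∑ x, ∑ y ∈ Finset.univ.erase y₀, Cb (x, y) t
          = ∑ x, (A x t - Cb (x, y₀) t) :=
        Finset.sum_congr rfl fun x _ => (hval Cb hCb x t ht).symm
      have h3 : ∑ x, Cb (x, y₀) t = B y₀ t := hCb.2.2 y₀ t ht
      have h4 : ∑ x, A x t = 1 := hA.2 t ht
      rw [h1, h2, Finset.sum_sub_distrib, h3, h4]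
      ring
    refine ⟨fun x t ht => ⟨hnonneg x t ht, ?_⟩, hsum⟩
    have hle := Finset.single_le_sum (f := fun x => D x t)
      (fun x _ => hnonneg x t ht) (Finset.mem_univ x)
    rw [hsum t ht] at hle
    exact hle
  have hD₁m : IsMeasurement S D₁ := hmeas D₁ C₁ C₂ hC₁ hC₂ hD₁val
  have hD₂m : IsMeasurement S D₂ := hmeas D₂ C₂ C₁ hC₂ hC₁ hD₂val
  have hmid : A ∈ openSegment ℝ D₁ D₂ := by
    refine ⟨1/2, 1/2, by norm_num, by norm_num, by norm_num, ?_⟩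
    rw [hD₁def, hD₂def]
    module
  have heq := hext.2 hD₁m hD₂m hmid
  have hAE : A + E = A := heq
  have hE0 : E = 0 := by rwa [add_eq_left] at hAE
  have hx : C₁ (x₀, y₀) - C₂ (x₀, y₀) = 0 := congrFun hE0 x₀
  have hx' : C₁ (x₀, y₀) = C₂ (x₀, y₀) := sub_eq_zero.mp hx
  rw [hx']

/-- if `A` is an extreme point of the convex set of measurements with outcome
set `X`, then joint measurements of `A` with any measurement `B` are unique (whenever they
exist); in particular any two joint measurements of `A` with itself have the same diagonal. -/
theorem extremal_measurement_unique_joint {V : Type} [NormedAddCommGroup V] [NormedSpace ℝ V]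
    (S : Set V) (hSconv : Convex ℝ S) (hScomp : IsCompact S)
    {X : Type*} [Fintype X] (A : X → (V →ᵃ[ℝ] ℝ)) (hA : IsMeasurement S A)
    (hext : A ∈ Set.extremePoints ℝ {B : X → (V →ᵃ[ℝ] ℝ) | IsMeasurement S B}) :
    (∀ (Y : Type) [Fintype Y] (B : Y → (V →ᵃ[ℝ] ℝ)), IsMeasurement S B →
        ∀ C₁ C₂ : X × Y → (V →ᵃ[ℝ] ℝ), IsJointMeasurement S A B C₁ →
          IsJointMeasurement S A B C₂ → ∀ p, ∀ s ∈ S, C₁ p s = C₂ p s) ∧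
      (∀ C₁ C₂ : X × X → (V →ᵃ[ℝ] ℝ), IsJointMeasurement S A A C₁ →
        IsJointMeasurement S A A C₂ → ∀ x, ∀ s ∈ S, C₁ (x, x) s = C₂ (x, x) s) := by
  refine ⟨fun Y _ B _ C₁ C₂ hC₁ hC₂ => unique_joint_key S A hA hext Y B C₁ C₂ hC₁ hC₂,
    fun C₁ C₂ h1 h2 x s hs => unique_joint_key S A hA hext X A C₁ C₂ h1 h2 (x, x) s hs⟩
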